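/- For every integer N ≥ 1, the sum over j from 1 to N-1 of cot²(πj/N) equals (N-1)(N-2)/3. -/

import Mathlib

open Real Finset

private lemma tele' (x : ℂ) (n : ℕ) :
    (x - 1) * ∑ k ∈ range n, (k : ℂ) * x ^ k
      = ((n:ℂ) - 1) * x ^ n - ∑ k ∈ range n, x ^ k + 1 := by
  induction n with
  | zero => simp
  | succ n ih =>
    rw [Finset.sum_range_succ, Finset.sum_range_succ (fun k => x ^ k)]
    push_cast
    linear_combination ih

private lemma sumsq' (n : ℕ) : ∑ k ∈ range n, (k:ℂ)^2 = ((n:ℂ)-1)*n*(2*n-1)/6 := by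
  induction n with
  | zero => simp
  | succ n ih =>
    rw [Finset.sum_range_succ]
    push_cast
    linear_combination ih

private lemma sumid' (n : ℕ) : ∑ k ∈ range n, (k:ℂ) = (n:ℂ)*((n:ℂ)-1)/2 := by
  induction n with
  | zero => simp
  | succ n ih =>
    rw [Finset.sum_range_succ]
    push_cast
    linear_combination ih

noncomputable def zN (N : ℕ) : ℂ := Complex.exp (2 * Real.pi * Complex.I / N)

lemma zN_pow_N (N : ℕ) (hN : 1 ≤ N) : zN N ^ N = 1 := by
  rw [zN, ← Complex.exp_nat_mul]
  have h : (N : ℂ) ≠ 0 := Nat.cast_ne_zero.mpr (by omega)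
  rw [show (N:ℂ) * (2 * Real.pi * Complex.I / N) = 2 * Real.pi * Complex.I by field_simp]
  exact Complex.exp_two_pi_mul_I

lemma zN_pow_ne_one (N : ℕ) (hN : 1 ≤ N) (m : ℕ) (hm : ¬ (N ∣ m)) : zN N ^ m ≠ 1 := by
  intro h
  rw [zN, ← Complex.exp_nat_mul, Complex.exp_eq_one_iff] at h
  obtain ⟨n, hn⟩ := h
  have hNC : (N : ℂ) ≠ 0 := Nat.cast_ne_zero.mpr (by omega)
  have hπ : (Real.pi : ℂ) ≠ 0 := by exact_mod_cast Real.pi_ne_zero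
  have h2 : (2 * (Real.pi:ℂ) * Complex.I) ≠ 0 :=
    mul_ne_zero (mul_ne_zero two_ne_zero hπ) Complex.I_ne_zero
  have hmn : (m : ℂ) = (n : ℂ) * N := by
    field_simp at hn
    exact mul_right_cancel₀ h2 (by linear_combination (2 * (Real.pi:ℂ) * Complex.I) * hn)
  have hmn' : (m : ℤ) = n * N := by exact_mod_cast hmn
  exact hm (Int.natCast_dvd_natCast.mp ⟨n, by linarith⟩)

lemma zN_sum_pow (N : ℕ) (hN : 1 ≤ N) (k : ℕ) :
    ∑ j ∈ Finset.Ico 1 N, zN N ^ (j * k) = (if N ∣ k then (N:ℂ) else 0) - 1 := by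
  have h0 : ∑ j ∈ range N, zN N ^ (j * k) = if N ∣ k then (N:ℂ) else 0 := by
    have hrw : ∀ j, zN N ^ (j * k) = (zN N ^ k) ^ j := by
      intro j; rw [← pow_mul, mul_comm]
    simp only [hrw]
    by_cases h : N ∣ k
    · have h1 : zN N ^ k = 1 := by
        obtain ⟨c, rfl⟩ := h
        rw [pow_mul, zN_pow_N N hN, one_pow]
      simp [h1, h]
    · rw [geom_sum_eq (zN_pow_ne_one N hN k h)]
      rw [← pow_mul, mul_comm k N, pow_mul, zN_pow_N N hN, one_pow]
      simp [h]
  have h1 : ∑ j ∈ Finset.Ico 0 N, zN N ^ (j * k)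
      = zN N ^ (0 * k) + ∑ j ∈ Finset.Ico 1 N, zN N ^ (j * k) :=
    Finset.sum_eq_sum_Ico_succ_bot (by omega) _
  rw [← Finset.range_eq_Ico] at h1
  rw [h0] at h1
  simp only [Nat.zero_mul, pow_zero] at h1
  linear_combination -h1

noncomputable def AA (N j : ℕ) : ℂ := ∑ k ∈ range N, (k : ℂ) * zN N ^ (j * k)

lemma AA_eq (N : ℕ) (hN : 1 ≤ N) (j : ℕ) (hj : ¬ N ∣ j) :
    (zN N ^ j - 1) * AA N j = N := by
  have hx1 : zN N ^ j ≠ 1 := zN_pow_ne_one N hN j hj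
  have hxN : (zN N ^ j) ^ N = 1 := by
    rw [← pow_mul, mul_comm, pow_mul, zN_pow_N N hN, one_pow]
  have hgeom : ∑ k ∈ range N, (zN N ^ j) ^ k = 0 := by
    rw [geom_sum_eq hx1, hxN]; simp
  have htl := tele' (zN N ^ j) N
  rw [hxN, hgeom] at htl
  have hrw : AA N j = ∑ k ∈ range N, (k:ℂ) * (zN N ^ j) ^ k := by
    unfold AA; congr 1; funext k; rw [← pow_mul]
  rw [hrw, htl]; ring

lemma AA_sum (N : ℕ) (hN : 1 ≤ N) :
    ∑ j ∈ Finset.Ico 1 N, AA N j = -((N:ℂ) * ((N:ℂ)-1) / 2) := by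
  unfold AA
  rw [Finset.sum_comm]
  have h1 : ∀ k ∈ range N, ∑ j ∈ Finset.Ico 1 N, (k : ℂ) * zN N ^ (j * k)
      = (k:ℂ) * ((if N ∣ k then (N:ℂ) else 0) - 1) := by
    intro k _
    rw [← Finset.mul_sum, zN_sum_pow N hN k]
  rw [Finset.sum_congr rfl h1]
  have h2 : ∀ k ∈ range N, (k:ℂ) * ((if N ∣ k then (N:ℂ) else 0) - 1) = -(k:ℂ) := by
    intro k hk
    rcases Nat.eq_zero_or_pos k with rfl | hk0
    · simp
    · rw [if_neg (fun hdvd => absurd (Nat.le_of_dvd hk0 hdvd) (by rw [Finset.mem_range] at hk; omega))]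
      ring
  rw [Finset.sum_congr rfl h2, Finset.sum_neg_distrib, sumid']

lemma AA_sq_sum (N : ℕ) (hN : 1 ≤ N) :
    ∑ j ∈ Finset.Ico 1 N, (AA N j)^2
      = (N:ℂ) * ((N:ℂ) * ((N:ℂ)*((N:ℂ)-1)/2) - (((N:ℂ)-1)*(N:ℂ)*(2*(N:ℂ)-1)/6))
        - ((N:ℂ)*((N:ℂ)-1)/2)^2 := by
  have hsq : ∀ j, (AA N j)^2
      = ∑ k ∈ range N, ∑ l ∈ range N, ((k:ℂ)*(l:ℂ)) * zN N ^ (j * (k + l)) := by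
    intro j
    rw [sq, AA, Finset.sum_mul_sum]
    apply Finset.sum_congr rfl; intro k _
    apply Finset.sum_congr rfl; intro l _
    rw [Nat.mul_add, pow_add]; ring
  simp only [hsq]
  rw [Finset.sum_comm]
  have h1 : ∀ k ∈ range N, ∑ j ∈ Finset.Ico 1 N, ∑ l ∈ range N,
        ((k:ℂ)*(l:ℂ)) * zN N ^ (j * (k + l))
      = ∑ l ∈ range N, ((k:ℂ)*(l:ℂ)) * ((if N ∣ (k+l) then (N:ℂ) else 0) - 1) := by
    intro k _
    rw [Finset.sum_comm]
    apply Finset.sum_congr rfl; intro l _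
    rw [← Finset.mul_sum, zN_sum_pow N hN (k+l)]
  rw [Finset.sum_congr rfl h1]
  have h2 : ∀ k ∈ range N, ∑ l ∈ range N, ((k:ℂ)*(l:ℂ)) * ((if N ∣ (k+l) then (N:ℂ) else 0) - 1)
      = (N:ℂ) * ((k:ℂ) * ((N:ℂ) - (k:ℂ))) - (k:ℂ) * ((N:ℂ)*((N:ℂ)-1)/2) := by
    intro k hk
    rw [Finset.mem_range] at hk
    have hsplit : ∀ l ∈ range N, ((k:ℂ)*(l:ℂ)) * ((if N ∣ (k+l) then (N:ℂ) else 0) - 1)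
        = (N:ℂ) * (if N ∣ (k+l) then (k:ℂ)*(l:ℂ) else 0) - (k:ℂ)*(l:ℂ) := by
      intro l _
      by_cases h : N ∣ (k+l) <;> simp [h] <;> ring
    rw [Finset.sum_congr rfl hsplit, Finset.sum_sub_distrib, ← Finset.mul_sum, ← Finset.mul_sum,
      sumid']
    congr 1
    congr 1
    rcases Nat.eq_zero_or_pos k with rfl | hk0
    · rw [Finset.sum_eq_zero]
      · simp
      · intro l _; by_cases h : N ∣ l <;> simp [h]
    · have hmem : N - k ∈ range N := by rw [Finset.mem_range]; omega
      have hzero : ∀ l ∈ range N, l ≠ N - k → (if N ∣ k + l then (k:ℂ)*(l:ℂ) else 0) = 0 := by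
        intro l hl hlne
        rw [Finset.mem_range] at hl
        rw [if_neg]
        intro hdvd
        have hkl : k + l = N := by
          rcases hdvd with ⟨c, hc⟩
          have : c < 2 := by nlinarith [hk, hl]
          interval_cases c <;> omega
        omega
      rw [Finset.sum_eq_single_of_mem (N - k) hmem hzero]
      rw [if_pos ⟨1, by omega⟩, Nat.cast_sub (by omega : k ≤ N)]
  rw [Finset.sum_congr rfl h2, Finset.sum_sub_distrib, ← Finset.mul_sum]
  have h3 : ∑ k ∈ range N, (k:ℂ) * ((N:ℂ) - (k:ℂ))
      = (N:ℂ) * ((N:ℂ)*((N:ℂ)-1)/2) - (((N:ℂ)-1)*(N:ℂ)*(2*(N:ℂ)-1)/6) := by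
    have h4 : ∀ k ∈ range N, (k:ℂ) * ((N:ℂ) - (k:ℂ)) = (N:ℂ) * (k:ℂ) - (k:ℂ)^2 := by
      intro k _; ring
    rw [Finset.sum_congr rfl h4, Finset.sum_sub_distrib, ← Finset.mul_sum, sumid', sumsq']
  rw [h3, ← Finset.sum_mul, sumid']
  ring

lemma cot_mul (x : ℝ) (hs : Real.sin x ≠ 0) :
    (Real.cot x : ℂ) * (Complex.exp (2 * (x:ℂ) * Complex.I) - 1)
      = Complex.I * (Complex.exp (2 * (x:ℂ) * Complex.I) + 1) := by
  have hsC : Complex.sin x ≠ 0 := by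
    rw [← Complex.ofReal_sin]
    exact_mod_cast hs
  have hexp : Complex.exp (2 * (x:ℂ) * Complex.I)
      = (Complex.cos x + Complex.sin x * Complex.I)^2 := by
    rw [show (2:ℂ) * x * Complex.I = x * Complex.I + x * Complex.I by ring,
      Complex.exp_add, Complex.exp_mul_I, sq]
  have hcot : (Real.cot x : ℂ) = Complex.cos x / Complex.sin x := by
    rw [Real.cot_eq_cos_div_sin]
    push_cast
    ring
  rw [hcot, hexp]
  have h := Complex.sin_sq_add_cos_sq (x:ℂ)
  set c := Complex.cos (x:ℂ)
  set s := Complex.sin (x:ℂ)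
  field_simp
  linear_combination ((c + Complex.I*s)) * h - (s^2*(c + s*Complex.I)) * Complex.I_sq

theorem cot_sq_sum (N : ℕ) (hN : 1 ≤ N) :
    ∑ j ∈ Finset.Ico 1 N, Real.cot (Real.pi * j / N) ^ 2
      = ((N : ℝ) - 1) * ((N : ℝ) - 2) / 3 := by
  have hNC : (N : ℂ) ≠ 0 := Nat.cast_ne_zero.mpr (by omega)
  have hNR : (0:ℝ) < N := by exact_mod_cast Nat.lt_of_lt_of_le Nat.zero_lt_one hN
  -- each term
  have hterm : ∀ j ∈ Finset.Ico 1 N,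
      ((Real.cot (Real.pi * j / N) : ℝ) : ℂ)^2
        = -(1 + (2/(N:ℂ)) * AA N j)^2 := by
    intro j hj
    rw [Finset.mem_Ico] at hj
    have hjdvd : ¬ N ∣ j := fun h => absurd (Nat.le_of_dvd (by omega) h) (by omega)
    have hω1 : zN N ^ j ≠ 1 := zN_pow_ne_one N hN j hjdvd
    have hωnz : zN N ^ j - 1 ≠ 0 := sub_ne_zero.mpr hω1
    have hA := AA_eq N hN j hjdvd
    have hx : (0:ℝ) < Real.pi * j / N := by
      have hj1 : (1:ℝ) ≤ (j:ℝ) := by exact_mod_cast hj.1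
      have := Real.pi_pos
      positivity
    have hxpi : Real.pi * j / N < Real.pi := by
      rw [div_lt_iff₀ hNR]
      have hjN : (j:ℝ) < N := by exact_mod_cast hj.2
      nlinarith [Real.pi_pos]
    have hs : Real.sin (Real.pi * j / N) ≠ 0 :=
      ne_of_gt (Real.sin_pos_of_pos_of_lt_pi hx hxpi)
    have hωe : zN N ^ j = Complex.exp (2 * ((Real.pi * j / N : ℝ) : ℂ) * Complex.I) := by
      rw [zN, ← Complex.exp_nat_mul]
      congr 1
      push_cast
      field_simp
    have hc := cot_mul (Real.pi * j / N) hs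
    rw [← hωe] at hc
    -- now algebra
    set t := ((Real.cot (Real.pi * j / N) : ℝ) : ℂ)
    set ω := zN N ^ j
    set A := AA N j
    field_simp
    linear_combination (-(t^2*((N:ℂ) + (ω-1)*A)) - ((N:ℂ) + (ω+3)*A)) * hA
      + A^2*(t*(ω-1) + Complex.I*(ω+1)) * hc + A^2*(ω+1)^2 * Complex.I_sq
  -- sum it
  have hsum : ((∑ j ∈ Finset.Ico 1 N, Real.cot (Real.pi * j / N) ^ 2 : ℝ) : ℂ)
      = ((N:ℂ) - 1) * ((N:ℂ) - 2) / 3 := by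
    rw [Complex.ofReal_sum]
    simp only [Complex.ofReal_pow]
    rw [Finset.sum_congr rfl hterm]
    have hexpand : ∀ j ∈ Finset.Ico 1 N,
        -(1 + (2/(N:ℂ)) * AA N j)^2
          = -1 + (-(4/(N:ℂ))) * AA N j + (-(4/(N:ℂ)^2)) * (AA N j)^2 := by
      intro j _
      field_simp
      ring
    rw [Finset.sum_congr rfl hexpand]
    rw [Finset.sum_add_distrib, Finset.sum_add_distrib, ← Finset.mul_sum, ← Finset.mul_sum,
      AA_sum N hN, AA_sq_sum N hN, Finset.sum_const, Nat.card_Ico]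
    have hcard : ((N - 1 : ℕ) : ℂ) = (N : ℂ) - 1 := by
      have : 1 ≤ N := hN
      push_cast [Nat.cast_sub this]
      ring
    rw [nsmul_eq_mul, hcard]
    field_simp
    ring
  exact_mod_cast hsum
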